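/- Let N ≥ 1, let y : Fin N → {0,1}, and let c_L, d : Fin N → ℝ be positive functions. Define B(P, y) := P^{1−y}(1−P)^{y} for P ∈ [0,1] and y ∈ {0,1} (with the convention 0^0 = 1), and for t ∈ {0,1}^N and P ∈ [0,1] define F(t, P) := ∏_{i : t_i = 1} c_{L,i} · ∏_{i : t_i = 0} d_i · B(P, y_i). Let 𝒫 := { T_n / T_d : T_d ∈ {1, …, N}, T_n ∈ {0, …, T_d} }. Then sup_{t ∈ {0,1}^N, P ∈ [0,1]} F(t, P) = max_{P ∈ 𝒫} ∏_{i=1}^N max( c_{L,i}, d_i · B(P, y_i) ). -/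

import Mathlib

lemma bern_mle (a b : ℕ) (hab : 0 < a + b) (p : ℝ) (hp0 : 0 ≤ p) (hp1 : p ≤ 1) :
    p ^ a * (1 - p) ^ b ≤
      ((a : ℝ) / ((a : ℝ) + b)) ^ a * ((b : ℝ) / ((a : ℝ) + b)) ^ b := by
  have h1p : (0:ℝ) ≤ 1 - p := by linarith
  rcases Nat.eq_zero_or_pos a with ha | ha
  · subst ha
    simp only [Nat.cast_zero, zero_add, pow_zero, one_mul]
    have hb' : 0 < b := by simpa using hab
    have hb : (0:ℝ) < b := by exact_mod_cast hb'
    rw [div_self hb.ne', one_pow]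
    exact pow_le_one₀ h1p (by linarith)
  rcases Nat.eq_zero_or_pos b with hb | hb
  · subst hb
    simp only [Nat.cast_zero, add_zero, pow_zero, mul_one]
    have ha' : (0:ℝ) < a := by exact_mod_cast ha
    rw [div_self ha'.ne', one_pow]
    exact pow_le_one₀ hp0 hp1
  -- main case: a, b ≥ 1
  have hs : (0:ℝ) < (a : ℝ) + b := by positivity
  set q : ℝ := (a : ℝ) / ((a : ℝ) + b) with hq
  have hq0 : 0 < q := by positivity
  have hq1 : q < 1 := by
    rw [hq, div_lt_one hs]
    have : (0:ℝ) < b := by exact_mod_cast hb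
    linarith
  have h1q : 1 - q = (b : ℝ) / ((a : ℝ) + b) := by
    rw [hq]; field_simp; ring
  have hw2 : 0 < 1 - q := by linarith
  set x₁ : ℝ := p / q with hx₁
  set x₂ : ℝ := (1 - p) / (1 - q) with hx₂
  have hx1 : 0 ≤ x₁ := div_nonneg hp0 hq0.le
  have hx2 : 0 ≤ x₂ := div_nonneg h1p hw2.le
  have key : x₁ ^ q * x₂ ^ (1 - q) ≤ 1 := by
    calc x₁ ^ q * x₂ ^ (1 - q) ≤ q * x₁ + (1 - q) * x₂ :=
          Real.geom_mean_le_arith_mean2_weighted hq0.le hw2.le hx1 hx2 (by ring)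
      _ = p + (1 - p) := by
          rw [hx₁, hx₂]; field_simp
      _ = 1 := by ring
  have hp_eq : p = q * x₁ := by rw [hx₁]; field_simp
  have h1p_eq : 1 - p = (1 - q) * x₂ := by rw [hx₂]; field_simp
  have key2 : p ^ q * (1 - p) ^ (1 - q) ≤ q ^ q * (1 - q) ^ (1 - q) := by
    calc p ^ q * (1 - p) ^ (1 - q)
        = (q * x₁) ^ q * ((1 - q) * x₂) ^ (1 - q) := by rw [← hp_eq, ← h1p_eq]
      _ = (q ^ q * x₁ ^ q) * ((1 - q) ^ (1 - q) * x₂ ^ (1 - q)) := by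
          rw [Real.mul_rpow hq0.le hx1, Real.mul_rpow hw2.le hx2]
      _ = (q ^ q * (1 - q) ^ (1 - q)) * (x₁ ^ q * x₂ ^ (1 - q)) := by ring
      _ ≤ (q ^ q * (1 - q) ^ (1 - q)) * 1 :=
          mul_le_mul_of_nonneg_left key (by positivity)
      _ = q ^ q * (1 - q) ^ (1 - q) := mul_one _
  have hqs : q * ((a:ℝ) + b) = (a : ℝ) := by rw [hq]; field_simp
  have h1qs : (1 - q) * ((a:ℝ) + b) = (b : ℝ) := by rw [h1q]; field_simp
  have e1 : (p ^ q) ^ ((a:ℝ)+b) = p ^ a := by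
    rw [← Real.rpow_mul hp0, hqs, Real.rpow_natCast]
  have e2 : ((1-p) ^ (1-q)) ^ ((a:ℝ)+b) = (1-p) ^ b := by
    rw [← Real.rpow_mul h1p, h1qs, Real.rpow_natCast]
  have e3 : (q ^ q) ^ ((a:ℝ)+b) = q ^ a := by
    rw [← Real.rpow_mul hq0.le, hqs, Real.rpow_natCast]
  have e4 : ((1-q) ^ (1-q)) ^ ((a:ℝ)+b) = (1-q) ^ b := by
    rw [← Real.rpow_mul hw2.le, h1qs, Real.rpow_natCast]
  rw [← h1q, ← e1, ← e2, ← e3, ← e4,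
      ← Real.mul_rpow (Real.rpow_nonneg hp0 _) (Real.rpow_nonneg h1p _),
      ← Real.mul_rpow (Real.rpow_nonneg hq0.le _) (Real.rpow_nonneg hw2.le _)]
  exact Real.rpow_le_rpow (by positivity) key2 hs.le

lemma step1 {N : ℕ} (y : Fin N → ℕ) (cL d : Fin N → ℝ)
    (hcL : ∀ i, 0 < cL i) (hd : ∀ i, 0 < d i)
    (t : Fin N → Bool) (P : ℝ) (hP0 : 0 ≤ P) (hP1 : P ≤ 1) :
    (∏ i ∈ Finset.univ.filter (fun i => t i = true), cL i) *
      ∏ i ∈ Finset.univ.filter (fun i => t i = false),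
        (d i * (P ^ (1 - y i) * (1 - P) ^ (y i)))
      ≤ ∏ i, max (cL i) (d i * (P ^ (1 - y i) * (1 - P) ^ (y i))) := by
  have h1P : (0:ℝ) ≤ 1 - P := by linarith
  have hBnn : ∀ i, 0 ≤ d i * (P ^ (1 - y i) * (1 - P) ^ (y i)) := fun i =>
    mul_nonneg (hd i).le (mul_nonneg (pow_nonneg hP0 _) (pow_nonneg h1P _))
  rw [← Finset.prod_filter_mul_prod_filter_not Finset.univ (fun i => t i = true)
        (fun i => max (cL i) (d i * (P ^ (1 - y i) * (1 - P) ^ (y i))))]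
  simp only [Bool.not_eq_true]
  apply mul_le_mul
  · exact Finset.prod_le_prod (fun i _ => (hcL i).le) (fun i _ => le_max_left _ _)
  · exact Finset.prod_le_prod (fun i _ => hBnn i) (fun i _ => le_max_right _ _)
  · exact Finset.prod_nonneg (fun i _ => hBnn i)
  · exact Finset.prod_nonneg (fun i _ => le_trans (hcL i).le (le_max_left _ _))

lemma keystep {N : ℕ} (hN : 1 ≤ N) (y : Fin N → ℕ) (hy : ∀ i, y i ≤ 1)
    (cL d : Fin N → ℝ) (hcL : ∀ i, 0 < cL i) (hd : ∀ i, 0 < d i)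
    (t : Fin N → Bool) (P : ℝ) (hP0 : 0 ≤ P) (hP1 : P ≤ 1) :
    ∃ Tn Td : ℕ, 1 ≤ Td ∧ Td ≤ N ∧ Tn ≤ Td ∧
      (∏ i ∈ Finset.univ.filter (fun i => t i = true), cL i) *
        ∏ i ∈ Finset.univ.filter (fun i => t i = false),
          (d i * (P ^ (1 - y i) * (1 - P) ^ (y i)))
      ≤ ∏ i, max (cL i)
            (d i * (((Tn : ℝ) / (Td : ℝ)) ^ (1 - y i) *
              (1 - (Tn : ℝ) / (Td : ℝ)) ^ (y i))) := by
  classical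
  by_cases hS : (Finset.univ.filter (fun i => t i = false)) = ∅
  · refine ⟨0, 1, le_refl 1, hN, Nat.zero_le 1, ?_⟩
    have ht : Finset.univ.filter (fun i => t i = true) = Finset.univ := by
      apply Finset.filter_true_of_mem
      intro i _
      by_contra h
      have : i ∈ Finset.univ.filter (fun i => t i = false) := by
        simp only [Finset.mem_filter, Finset.mem_univ, true_and]
        cases hti : t i
        · rfl
        · exact absurd hti h
      rw [hS] at this; exact absurd this (Finset.notMem_empty i)
    rw [hS, ht, Finset.prod_empty, mul_one]
    exact Finset.prod_le_prod (fun i _ => (hcL i).le) (fun i _ => le_max_left _ _)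
  · set S := Finset.univ.filter (fun i => t i = false) with hSdef
    set Tn := ∑ i ∈ S, (1 - y i) with hTn
    set n := ∑ i ∈ S, y i with hn
    have hsum : Tn + n = S.card := by
      rw [hTn, hn, ← Finset.sum_add_distrib]
      calc ∑ i ∈ S, ((1 - y i) + y i) = ∑ i ∈ S, 1 := by
            exact Finset.sum_congr rfl (fun i _ => by
              rw [Nat.sub_add_cancel (hy i)])
        _ = S.card := by simp
    have hTd1 : 1 ≤ S.card := Finset.card_pos.mpr (Finset.nonempty_of_ne_empty hS)
    have hTdN : S.card ≤ N := le_trans (Finset.card_filter_le _ _) (by simp)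
    refine ⟨Tn, S.card, hTd1, hTdN, by omega, ?_⟩
    have hcardR : (0:ℝ) < (S.card : ℝ) := by exact_mod_cast hTd1
    set P' : ℝ := (Tn : ℝ) / (S.card : ℝ) with hP'
    have hP'0 : 0 ≤ P' := div_nonneg (Nat.cast_nonneg _) (Nat.cast_nonneg _)
    have hP'1 : P' ≤ 1 := by
      rw [hP', div_le_one hcardR]
      exact_mod_cast (by omega : Tn ≤ S.card)
    have hcast : (Tn : ℝ) + (n : ℝ) = (S.card : ℝ) := by exact_mod_cast hsum
    have h1P' : 1 - P' = (n : ℝ) / (S.card : ℝ) := by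
      rw [hP']; field_simp; linarith
    -- product over S of the Bernoulli terms
    have hprodB : ∀ Q : ℝ, ∏ i ∈ S, (d i * (Q ^ (1 - y i) * (1 - Q) ^ (y i)))
        = (∏ i ∈ S, d i) * (Q ^ Tn * (1 - Q) ^ n) := by
      intro Q
      rw [Finset.prod_mul_distrib, Finset.prod_mul_distrib,
        Finset.prod_pow_eq_pow_sum, Finset.prod_pow_eq_pow_sum, hTn, hn]
    have hbern : P ^ Tn * (1 - P) ^ n ≤ P' ^ Tn * (1 - P') ^ n := by
      have := bern_mle Tn n (by omega) P hP0 hP1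
      rwa [hcast, ← hP', ← h1P'] at this
    have h2 : ∏ i ∈ S, (d i * (P ^ (1 - y i) * (1 - P) ^ (y i)))
        ≤ ∏ i ∈ S, (d i * (P' ^ (1 - y i) * (1 - P') ^ (y i))) := by
      rw [hprodB P, hprodB P']
      exact mul_le_mul_of_nonneg_left hbern
        (Finset.prod_nonneg (fun i _ => (hd i).le))
    calc (∏ i ∈ Finset.univ.filter (fun i => t i = true), cL i) *
          ∏ i ∈ S, (d i * (P ^ (1 - y i) * (1 - P) ^ (y i)))
        ≤ (∏ i ∈ Finset.univ.filter (fun i => t i = true), cL i) *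
          ∏ i ∈ S, (d i * (P' ^ (1 - y i) * (1 - P') ^ (y i))) :=
          mul_le_mul_of_nonneg_left h2
            (Finset.prod_nonneg (fun i _ => (hcL i).le))
      _ ≤ ∏ i, max (cL i) (d i * (P' ^ (1 - y i) * (1 - P') ^ (y i))) := by
          rw [hSdef]
          exact step1 y cL d hcL hd t P' hP'0 hP'1

lemma prod_max_split {N : ℕ} (y : Fin N → ℕ) (cL d : Fin N → ℝ) (P : ℝ) :
    ∃ t : Fin N → Bool,
      (∏ i, max (cL i) (d i * (P ^ (1 - y i) * (1 - P) ^ (y i))))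
        = (∏ i ∈ Finset.univ.filter (fun i => t i = true), cL i) *
            ∏ i ∈ Finset.univ.filter (fun i => t i = false),
              (d i * (P ^ (1 - y i) * (1 - P) ^ (y i))) := by
  classical
  refine ⟨fun i => decide (d i * (P ^ (1 - y i) * (1 - P) ^ (y i)) ≤ cL i), ?_⟩
  rw [← Finset.prod_filter_mul_prod_filter_not Finset.univ
        (fun i => (decide (d i * (P ^ (1 - y i) * (1 - P) ^ (y i)) ≤ cL i)) = true)
        (fun i => max (cL i) (d i * (P ^ (1 - y i) * (1 - P) ^ (y i))))]
  simp only [Bool.not_eq_true]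
  congr 1
  · apply Finset.prod_congr rfl
    intro i hi
    simp only [Finset.mem_filter, decide_eq_true_eq] at hi
    exact max_eq_left hi.2
  · apply Finset.prod_congr rfl
    intro i hi
    simp only [Finset.mem_filter, decide_eq_false_iff_not] at hi
    exact max_eq_right (not_le.mp hi.2).le

/-- Correctness of the A-GLRT maximization step (Theorem 2 + Lemma 5 of the paper):
the supremum of the joint likelihood over trust vectors `t ∈ {0,1}^N` and malicious error
probability `P ∈ [0,1]` equals the maximum, over `P` in the finite set
`𝒫 = {Tn / Td : 1 ≤ Td ≤ N, 0 ≤ Tn ≤ Td}`, of the product over robots of the larger of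
the legitimate score `cL i` and the malicious score `d i * P ^ (1 - y i) * (1 - P) ^ (y i)`. -/
theorem aglrt_sup_eq_max_over_fractions
    (N : ℕ) (hN : 1 ≤ N) (y : Fin N → ℕ) (hy : ∀ i, y i ≤ 1)
    (cL d : Fin N → ℝ) (hcL : ∀ i, 0 < cL i) (hd : ∀ i, 0 < d i) :
    sSup {x : ℝ | ∃ (t : Fin N → Bool), ∃ P ∈ Set.Icc (0 : ℝ) 1,
        x = (∏ i ∈ Finset.univ.filter (fun i => t i = true), cL i) *
              ∏ i ∈ Finset.univ.filter (fun i => t i = false),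
                (d i * (P ^ (1 - y i) * (1 - P) ^ (y i)))}
      = sSup {x : ℝ | ∃ Tn Td : ℕ, 1 ≤ Td ∧ Td ≤ N ∧ Tn ≤ Td ∧
          x = ∏ i, max (cL i)
                (d i * (((Tn : ℝ) / (Td : ℝ)) ^ (1 - y i) *
                  (1 - (Tn : ℝ) / (Td : ℝ)) ^ (y i)))} := by
  classical
  set A : Set ℝ := {x : ℝ | ∃ (t : Fin N → Bool), ∃ P ∈ Set.Icc (0 : ℝ) 1,
        x = (∏ i ∈ Finset.univ.filter (fun i => t i = true), cL i) *
              ∏ i ∈ Finset.univ.filter (fun i => t i = false),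
                (d i * (P ^ (1 - y i) * (1 - P) ^ (y i)))} with hA
  set B : Set ℝ := {x : ℝ | ∃ Tn Td : ℕ, 1 ≤ Td ∧ Td ≤ N ∧ Tn ≤ Td ∧
          x = ∏ i, max (cL i)
                (d i * (((Tn : ℝ) / (Td : ℝ)) ^ (1 - y i) *
                  (1 - (Tn : ℝ) / (Td : ℝ)) ^ (y i)))} with hB
  -- B is finite, hence bounded above
  have hBfin : B.Finite := by
    apply Set.Finite.subset (Set.Finite.image
      (f := fun pr : ℕ × ℕ => ∏ i, max (cL i)
          (d i * (((pr.1 : ℝ) / (pr.2 : ℝ)) ^ (1 - y i) *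
            (1 - (pr.1 : ℝ) / (pr.2 : ℝ)) ^ (y i))))
      ((Set.finite_Iic N).prod (Set.finite_Iic N)))
    rintro x ⟨Tn, Td, h1, h2, h3, rfl⟩
    exact ⟨(Tn, Td), ⟨Set.mem_Iic.mpr (le_trans h3 h2), Set.mem_Iic.mpr h2⟩, rfl⟩
  have hBne : B.Nonempty :=
    ⟨_, 0, 1, le_refl 1, hN, Nat.zero_le 1, rfl⟩
  have hBbdd : BddAbove B := hBfin.bddAbove
  have hAne : A.Nonempty :=
    ⟨_, fun _ => true, 0, ⟨le_refl 0, zero_le_one⟩, rfl⟩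
  -- every element of A is at most sSup B
  have key : ∀ x ∈ A, x ≤ sSup B := by
    rintro x ⟨t, P, hP, rfl⟩
    obtain ⟨Tn, Td, h1, h2, h3, hle⟩ :=
      keystep hN y hy cL d hcL hd t P hP.1 hP.2
    exact le_trans hle (le_csSup hBbdd ⟨Tn, Td, h1, h2, h3, rfl⟩)
  -- B ⊆ A
  have hBA : B ⊆ A := by
    rintro x ⟨Tn, Td, h1, h2, h3, rfl⟩
    have hTd : (0:ℝ) < (Td : ℝ) := by exact_mod_cast h1
    obtain ⟨t, ht⟩ := prod_max_split y cL d ((Tn : ℝ) / (Td : ℝ))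
    exact ⟨t, (Tn : ℝ) / (Td : ℝ),
      ⟨div_nonneg (Nat.cast_nonneg _) (Nat.cast_nonneg _),
        (div_le_one hTd).mpr (by exact_mod_cast h3)⟩, ht⟩
  exact le_antisymm (csSup_le hAne key) (csSup_le_csSup ⟨sSup B, key⟩ hBne hBA)
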